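/- Let f(x) = x^4 + a x^2 + b x + c be a real quartic with all roots real, exactly two of which are positive (and two negative). Then the sum of the absolute values of the roots of f equals the largest real root of g(x) = x^6 + 8a x^4 + 16(a^2 - 4c) x^2 - 64 b^2. -/
import Mathlib


/-- If `f(x) = x^4 + a x^2 + b x + c` has four real roots, exactly two positive and
two negative (`x1 ≥ x2 > 0 > x3 ≥ x4`), then the sum of the absolute values of the
roots of `f` equals the largest real root of
`g(x) = x^6 + 8 a x^4 + 16 (a^2 - 4 c) x^2 - 64 b^2`. -/
theorem stmt_2 (a b c x1 x2 x3 x4 : ℝ)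
    (hf : ∀ t : ℝ, t ^ 4 + a * t ^ 2 + b * t + c
        = (t - x1) * (t - x2) * (t - x3) * (t - x4))
    (h12 : x1 ≥ x2) (h2 : x2 > 0) (h3 : 0 > x3) (h34 : x3 ≥ x4) :
    IsGreatest {t : ℝ | t ^ 6 + 8 * a * t ^ 4 + 16 * (a ^ 2 - 4 * c) * t ^ 2
        - 64 * b ^ 2 = 0} (|x1| + |x2| + |x3| + |x4|) := by
  have he1 : x1 + x2 + x3 + x4 = 0 := by
    linear_combination (hf 2) / 12 - (hf (-2)) / 12 - (hf 1) / 6 + (hf (-1)) / 6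
  have hx4 : x4 = -x1 - x2 - x3 := by linarith
  subst hx4
  have hc : c = x1 * x2 * x3 * (-x1 - x2 - x3) := by linear_combination hf 0
  have ha : a = x1*x2 + x1*x3 + x1*(-x1-x2-x3) + x2*x3 + x2*(-x1-x2-x3)
      + x3*(-x1-x2-x3) := by
    linear_combination (hf 1) / 2 + (hf (-1)) / 2 - hf 0
  have hb : b = -(x1*x2*x3 + x1*x2*(-x1-x2-x3) + x1*x3*(-x1-x2-x3)
      + x2*x3*(-x1-x2-x3)) := by
    linear_combination (2/3 : ℝ) * (hf 1) - (2/3 : ℝ) * (hf (-1))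
      - (hf 2) / 12 + (hf (-2)) / 12
  subst ha hb hc
  have h1 : (0:ℝ) < x1 := lt_of_lt_of_le h2 h12
  have h4 : -x1 - x2 - x3 < 0 := by linarith
  have ha1 : |x1| = x1 := abs_of_pos h1
  have ha2 : |x2| = x2 := abs_of_pos h2
  have ha3 : |x3| = -x3 := abs_of_neg h3
  have ha4 : |(-x1 - x2 - x3)| = -(-x1 - x2 - x3) := abs_of_neg h4
  rw [ha1, ha2, ha3, ha4]
  constructor
  · show _ = 0
    ring
  · intro t ht
    simp only [Set.mem_setOf_eq] at ht
    have hfact : (t - (2*x1 + 2*x2)) * (t + (2*x1 + 2*x2)) * (t - (2*x1 + 2*x3))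
        * (t + (2*x1 + 2*x3)) * (t - (2*x2 + 2*x3)) * (t + (2*x2 + 2*x3)) = 0 := by
      linear_combination ht
    rcases mul_eq_zero.mp hfact with h | h
    · rcases mul_eq_zero.mp h with h | h
      · rcases mul_eq_zero.mp h with h | h
        · rcases mul_eq_zero.mp h with h | h
          · rcases mul_eq_zero.mp h with h | h
            · linarith
            · linarith
          · linarith
        · linarith
      · linarith
    · linarith
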